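/- Let 𝔥 be a finite-dimensional real Leibniz algebra. The operation X ▷ Y := exp(ad_X)(Y) makes 𝔥 a rack pointed in 0: (i) X ▷ (Y ▷ Z) = (X ▷ Y) ▷ (X ▷ Z) for all X,Y,Z ∈ 𝔥; (ii) for each X ∈ 𝔥 the map Y ↦ X ▷ Y is a linear bijection of 𝔥; (iii) 0 ▷ Y = Y and X ▷ 0 = 0 for all X,Y ∈ 𝔥. -/

import Mathlib

open NormedSpace Finset
set_option synthInstance.maxHeartbeats 1000000
set_option maxHeartbeats 2000000

section Helpers

lemma coeff_eq {n k : ℕ} (hk : k ≤ n) :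
    ((n.factorial : ℝ))⁻¹ * (n.choose k : ℝ)
      = ((k.factorial : ℝ))⁻¹ * (((n - k).factorial : ℝ))⁻¹ := by
  have h := Nat.choose_mul_factorial_mul_factorial hk
  have h' : (n.choose k : ℝ) * (k.factorial : ℝ) * ((n - k).factorial : ℝ)
      = (n.factorial : ℝ) := by exact_mod_cast congrArg Nat.cast h
  have h1 : (n.factorial : ℝ) ≠ 0 := Nat.cast_ne_zero.2 n.factorial_ne_zero
  have h2 : (k.factorial : ℝ) ≠ 0 := Nat.cast_ne_zero.2 k.factorial_ne_zero
  have h3 : (((n - k).factorial : ℝ)) ≠ 0 := Nat.cast_ne_zero.2 (n - k).factorial_ne_zero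
  field_simp
  linear_combination h'

variable {W : Type*} [NormedAddCommGroup W] [NormedSpace ℝ W] [CompleteSpace W]

lemma exp_apply_tsum (T : W →L[ℝ] W) (w : W) :
    exp T w = ∑' n : ℕ, ((Nat.factorial n : ℝ)⁻¹) • (T ^ n) w := by
  rw [exp_eq_tsum (𝕂 := ℝ)]
  have hs : Summable fun n : ℕ => ((Nat.factorial n : ℝ)⁻¹) • T ^ n := expSeries_summable' T
  have := ((ContinuousLinearMap.apply ℝ W w).map_tsum hs)
  simpa using this

lemma mulL_pow_apply (D : W →L[ℝ] W) (n : ℕ) (a : W →L[ℝ] W) :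
    ((ContinuousLinearMap.mul ℝ (W →L[ℝ] W) D) ^ n) a = D ^ n * a := by
  induction n generalizing a with
  | zero => simp
  | succ n ih =>
    rw [pow_succ', pow_succ']
    simp only [ContinuousLinearMap.mul_apply]
    rw [ih]
    simp [mul_assoc, ContinuousLinearMap.mul_apply']

lemma mulR_pow_apply (D : W →L[ℝ] W) (n : ℕ) (a : W →L[ℝ] W) :
    (((ContinuousLinearMap.mul ℝ (W →L[ℝ] W)).flip D) ^ n) a = a * D ^ n := by
  induction n generalizing a with
  | zero => simp
  | succ n ih =>
    rw [pow_succ']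
    simp only [ContinuousLinearMap.mul_apply]
    rw [ih]
    simp only [ContinuousLinearMap.flip_apply, ContinuousLinearMap.mul_apply']
    rw [pow_succ', mul_assoc]
    congr 1
    exact (Commute.pow_self D n).eq.symm ▸ rfl

lemma conj_key (b : W →L[ℝ] W →L[ℝ] W)
    (hLeib : ∀ X Y Z : W, b X (b Y Z) = b (b X Y) Z + b Y (b X Z)) (X Y : W) :
    b (exp (b X) Y) = exp (b X) * b Y * exp (-(b X)) := by
  set D := b X with hD
  set a := b Y with ha
  set L : (W →L[ℝ] W) →L[ℝ] (W →L[ℝ] W)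
    := ContinuousLinearMap.mul ℝ (W →L[ℝ] W) D with hL
  set R : (W →L[ℝ] W) →L[ℝ] (W →L[ℝ] W)
    := (ContinuousLinearMap.mul ℝ (W →L[ℝ] W)).flip (-D) with hR
  set d : (W →L[ℝ] W) →L[ℝ] (W →L[ℝ] W) := L + R with hd
  have step1 : ∀ U : W, b (D U) = d (b U) := by
    intro U
    ext Z
    have h := hLeib X U Z
    have hrhs : d (b U) Z = b X (b U Z) - b U (b X Z) := by
      simp [hd, hL, hR, hD, ContinuousLinearMap.mul_apply', ContinuousLinearMap.mul_apply,
        sub_eq_add_neg]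
    rw [hrhs, hD, eq_sub_iff_add_eq]
    exact h.symm
  have step2 : ∀ n : ℕ, b ((D ^ n) Y) = (d ^ n) (b Y) := by
    intro n
    induction n with
    | zero => simp
    | succ n ih =>
      rw [pow_succ', pow_succ']
      simp only [ContinuousLinearMap.mul_apply]
      calc b (D ((D ^ n) Y)) = d (b ((D ^ n) Y)) := step1 _
        _ = d ((d ^ n) (b Y)) := by rw [ih]
  have hcomm : Commute L R := by
    ext u z
    simp only [ContinuousLinearMap.mul_apply, hL, hR, ContinuousLinearMap.flip_apply,
      ContinuousLinearMap.mul_apply', ContinuousLinearMap.coe_mul, Function.comp_apply,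
      mul_assoc]
  have expand : ∀ n : ℕ, (d ^ n) a
      = ∑ k ∈ range (n + 1), (n.choose k) • (D ^ k * a * (-D) ^ (n - k)) := by
    intro n
    have hp := hcomm.add_pow n
    rw [hd, hp]
    rw [ContinuousLinearMap.sum_apply]
    refine Finset.sum_congr rfl ?_
    intro k hk
    have hcast : L ^ k * R ^ (n - k) * ((n.choose k : ℕ) : (W →L[ℝ] W) →L[ℝ] (W →L[ℝ] W))
        = (n.choose k) • (L ^ k * R ^ (n - k)) := by
      rw [← (Nat.cast_commute (n.choose k) (L ^ k * R ^ (n - k))).eq, ← nsmul_eq_mul]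
    rw [hcast, ContinuousLinearMap.smul_apply, ContinuousLinearMap.mul_apply,
      mulR_pow_apply, mulL_pow_apply, mul_assoc]
  -- summability facts
  have hf : Summable fun n : ℕ => ‖((n.factorial : ℝ))⁻¹ • D ^ n‖ :=
    norm_expSeries_summable' (𝕂 := ℝ) D
  have hg : Summable fun m : ℕ => ‖((m.factorial : ℝ))⁻¹ • (a * (-D) ^ m)‖ := by
    refine Summable.of_nonneg_of_le (fun n => norm_nonneg _) (fun m => ?_)
      ((norm_expSeries_summable' (𝕂 := ℝ) (-D)).mul_left ‖a‖)
    calc ‖((m.factorial : ℝ))⁻¹ • (a * (-D) ^ m)‖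
        = ‖a * (((m.factorial : ℝ))⁻¹ • (-D) ^ m)‖ := by rw [mul_smul_comm]
      _ ≤ ‖a‖ * ‖((m.factorial : ℝ))⁻¹ • (-D) ^ m‖ := norm_mul_le _ _
  have hsum : Summable fun n : ℕ => ((Nat.factorial n : ℝ)⁻¹) • (D ^ n) Y := by
    have hs : Summable fun n : ℕ => ((Nat.factorial n : ℝ)⁻¹) • D ^ n := expSeries_summable' D
    have := ((ContinuousLinearMap.apply ℝ W Y).hasSum hs.hasSum).summable
    simpa using this
  calc b (exp D Y)
      = ∑' n : ℕ, ((n.factorial : ℝ))⁻¹ • b ((D ^ n) Y) := by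
        rw [exp_apply_tsum D Y, b.map_tsum hsum]
        simp only [map_smul]
    _ = ∑' n : ℕ, ∑ k ∈ range (n + 1),
          (((k.factorial : ℝ))⁻¹ • D ^ k)
            * (((((n - k).factorial : ℝ))⁻¹) • (a * (-D) ^ (n - k))) := by
        congr 1
        funext n
        rw [step2, expand, Finset.smul_sum]
        refine Finset.sum_congr rfl ?_
        intro k hk
        have hkn : k ≤ n := Nat.lt_succ_iff.1 (Finset.mem_range.1 hk)
        rw [smul_mul_assoc, mul_smul_comm, smul_smul,
          ← Nat.cast_smul_eq_nsmul ℝ (n.choose k), smul_smul, ← coeff_eq hkn, ← mul_assoc]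
    _ = (∑' n : ℕ, ((n.factorial : ℝ))⁻¹ • D ^ n)
          * ∑' m : ℕ, ((m.factorial : ℝ))⁻¹ • (a * (-D) ^ m) :=
        (tsum_mul_tsum_eq_tsum_sum_range_of_summable_norm hf hg).symm
    _ = exp D * (a * exp (-D)) := by
        have e1 : exp D = ∑' n : ℕ, ((n.factorial : ℝ))⁻¹ • D ^ n :=
          congrFun (exp_eq_tsum (𝕂 := ℝ)) D
        have e2 : exp (-D) = ∑' n : ℕ, ((n.factorial : ℝ))⁻¹ • (-D) ^ n :=
          congrFun (exp_eq_tsum (𝕂 := ℝ)) (-D)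
        rw [e1, e2]
        congr 1
        simp only [← mul_smul_comm]
        exact (expSeries_summable' (𝕂 := ℝ) (-D)).tsum_mul_left a
    _ = exp D * a * exp (-D) := (mul_assoc _ _ _).symm

end Helpers

theorem exponential_rack
    {V : Type*} [NormedAddCommGroup V] [NormedSpace ℝ V] [FiniteDimensional ℝ V]
    (b : V →L[ℝ] V →L[ℝ] V)
    (hLeib : ∀ X Y Z : V, b X (b Y Z) = b (b X Y) Z + b Y (b X Z)) :
    (∀ X Y Z : V,
      exp (b X) (exp (b Y) Z)
        = exp (b (exp (b X) Y)) (exp (b X) Z)) ∧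
    (∀ X : V, Function.Bijective (fun Y : V => exp (b X) Y)) ∧
    (∀ (X : V) (c : ℝ) (Y Z : V),
      exp (b X) (c • Y + Z) = c • exp (b X) Y + exp (b X) Z) ∧
    (∀ Y : V, exp (b (0 : V)) Y = Y) ∧
    (∀ X : V, exp (b X) (0 : V) = 0) := by
  have hcomp : CompleteSpace V := FiniteDimensional.complete ℝ V
  let +nondep : NormedAlgebra ℚ (V →L[ℝ] V) := .restrictScalars ℚ ℝ (V →L[ℝ] V)
  have hinv : ∀ X : V, exp (b X) * exp (-(b X)) = 1 ∧ exp (-(b X)) * exp (b X) = 1 := by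
    intro X
    have e1 : exp (b X + -(b X)) = exp (b X) * exp (-(b X)) := by
      exact exp_add_of_commute (Commute.refl (b X)).neg_right
    have e2 : exp (-(b X) + b X) = exp (-(b X)) * exp (b X) := by
      exact exp_add_of_commute (Commute.refl (b X)).neg_left
    have z1 : b X + -(b X) = 0 := by abel
    have z2 : -(b X) + b X = 0 := by abel
    rw [z1, exp_zero] at e1
    rw [z2, exp_zero] at e2
    exact ⟨e1.symm, e2.symm⟩
  refine ⟨?_, ?_, ?_, ?_, ?_⟩
  · intro X Y Z
    have hu := hinv X
    have hexpconj : exp (b (exp (b X) Y))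
        = exp (b X) * exp (b Y) * exp (-(b X)) := by
      have h := exp_units_conj
        (⟨exp (b X), exp (-(b X)), hu.1, hu.2⟩ : (V →L[ℝ] V)ˣ) (b Y)
      simp only [Units.inv_mk] at h
      rw [conj_key b hLeib X Y]
      exact h
    calc exp (b X) (exp (b Y) Z)
        = (exp (b X) * exp (b Y)) Z := by
          simp [ContinuousLinearMap.mul_apply]
      _ = ((exp (b X) * exp (b Y) * exp (-(b X))) * exp (b X)) Z := by
          rw [mul_assoc (exp (b X) * exp (b Y)), hu.2, mul_one]
      _ = exp (b (exp (b X) Y)) (exp (b X) Z) := by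
          rw [hexpconj]; simp [ContinuousLinearMap.mul_apply]
  · intro X
    have hu := hinv X
    refine Function.bijective_iff_has_inverse.2 ⟨fun Y => exp (-(b X)) Y, ?_, ?_⟩
    · intro Y
      have := congrArg (fun T : V →L[ℝ] V => T Y) hu.2
      simpa [ContinuousLinearMap.mul_apply] using this
    · intro Y
      have := congrArg (fun T : V →L[ℝ] V => T Y) hu.1
      simpa [ContinuousLinearMap.mul_apply] using this
  · intro X c Y Z
    simp
  · intro Y
    simp [map_zero, exp_zero]
  · intro X
    simp
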